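/- Suppose {v_j}_{j=1}^k is a frame in ℝ^n with frame bounds A < B (not necessarily optimal). For every ε > 0 there exist vectors {δ_j}_{j=1}^k with ‖δ_j‖ < ε such that {v_j + δ_j}_{j=1}^k is a frame with frame bounds A₁, B₁ satisfying B₁/A₁ < B/A. -/

import Mathlib

open scoped RealInnerProductSpace

section aux

variable {n k : ℕ}

noncomputable def frameOp (v : Fin k → EuclideanSpace ℝ (Fin n)) :
    EuclideanSpace ℝ (Fin n) →ₗ[ℝ] EuclideanSpace ℝ (Fin n) where
  toFun x := ∑ j, ⟪x, v j⟫ • v j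
  map_add' x y := by simp [inner_add_left, add_smul, Finset.sum_add_distrib]
  map_smul' c x := by simp [inner_smul_left, mul_smul, Finset.smul_sum]

lemma frameOp_symm (v : Fin k → EuclideanSpace ℝ (Fin n)) :
    (frameOp v).IsSymmetric := by
  intro x y
  simp only [frameOp, LinearMap.coe_mk, AddHom.coe_mk, sum_inner, inner_sum,
    real_inner_smul_left, real_inner_smul_right]
  congr 1; ext j
  rw [real_inner_comm (v j) y]
  ring

lemma inner_frameOp (v : Fin k → EuclideanSpace ℝ (Fin n)) (x : EuclideanSpace ℝ (Fin n)) :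
    ⟪frameOp v x, x⟫ = ∑ j, ⟪x, v j⟫ ^ 2 := by
  simp only [frameOp, LinearMap.coe_mk, AddHom.coe_mk, sum_inner, real_inner_smul_left]
  congr 1; ext j
  rw [real_inner_comm (v j) x]
  ring

lemma mono_f {A B t μ : ℝ} (hA : 0 < A) (hAB : A ≤ B) (h1 : A ≤ μ) (h2 : μ ≤ B)
    (ht0 : 0 < t) (htB : t * B ≤ 1/3) :
    A * (1 - t*A)^2 ≤ μ * (1 - t*μ)^2 ∧ μ * (1 - t*μ)^2 ≤ B * (1 - t*B)^2 := by
  have hta : t * A ≤ 1/3 := by nlinarith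
  have htμ : t * μ ≤ 1/3 := by nlinarith
  constructor
  · have hbr : (0:ℝ) ≤ (1 - t*A - t*μ)^2 - (t*A)*(t*μ) := by nlinarith
    nlinarith [mul_nonneg (sub_nonneg.2 h1) hbr]
  · have hbr : (0:ℝ) ≤ (1 - t*B - t*μ)^2 - (t*B)*(t*μ) := by nlinarith
    nlinarith [mul_nonneg (sub_nonneg.2 h2) hbr]

end aux

theorem better_frame {n k : ℕ} (v : Fin k → EuclideanSpace ℝ (Fin n)) (A B : ℝ)
    (hA : 0 < A) (hAB : A < B)
    (hframe : ∀ x : EuclideanSpace ℝ (Fin n),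
      A * ‖x‖ ^ 2 ≤ ∑ j, ⟪x, v j⟫ ^ 2 ∧ ∑ j, ⟪x, v j⟫ ^ 2 ≤ B * ‖x‖ ^ 2)
    (ε : ℝ) (hε : 0 < ε) :
    ∃ δ : Fin k → EuclideanSpace ℝ (Fin n), (∀ j, ‖δ j‖ < ε) ∧
      ∃ A₁ B₁ : ℝ, 0 < A₁ ∧ A₁ ≤ B₁ ∧
        (∀ x : EuclideanSpace ℝ (Fin n),
          A₁ * ‖x‖ ^ 2 ≤ ∑ j, ⟪x, v j + δ j⟫ ^ 2 ∧
          ∑ j, ⟪x, v j + δ j⟫ ^ 2 ≤ B₁ * ‖x‖ ^ 2) ∧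
        B₁ / A₁ < B / A := by
  classical
  have hB : 0 < B := hA.trans hAB
  set M : ℝ := ∑ j, ‖frameOp v (v j)‖ with hM
  have hM0 : 0 ≤ M := Finset.sum_nonneg fun j _ => norm_nonneg _
  set t : ℝ := min (1 / (3 * B)) (ε / (M + 1)) with ht
  have ht0 : 0 < t := lt_min (by positivity) (by positivity)
  have htB : t * B ≤ 1 / 3 := by
    have h1 : t ≤ 1 / (3 * B) := min_le_left _ _
    have h2 : t * (3 * B) ≤ 1 := by
      rw [← le_div_iff₀ (by positivity)]
      simpa using h1
    linarith
  have htε : t * (M + 1) ≤ ε := by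
    have h1 : t ≤ ε / (M + 1) := min_le_right _ _
    rw [le_div_iff₀ (by positivity)] at h1
    linarith
  have htA : t * A < 1 := by nlinarith
  have hA1 : 0 < A * (1 - t * A) ^ 2 := by
    have : (0:ℝ) < (1 - t*A)^2 := pow_pos (by linarith) 2
    exact mul_pos hA this
  refine ⟨fun j => -(t • frameOp v (v j)), ?_,
    A * (1 - t * A) ^ 2, B * (1 - t * B) ^ 2, hA1, ?_, ?_, ?_⟩
  · intro j
    have hle : ‖frameOp v (v j)‖ ≤ M :=
      Finset.single_le_sum (fun i _ => norm_nonneg (frameOp v (v i))) (Finset.mem_univ j)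
    calc ‖-(t • frameOp v (v j))‖ = t * ‖frameOp v (v j)‖ := by
          rw [norm_neg, norm_smul, Real.norm_eq_abs, abs_of_pos ht0]
      _ ≤ t * M := by nlinarith
      _ < t * (M + 1) := by nlinarith
      _ ≤ ε := htε
  · exact (mono_f hA hAB.le le_rfl hAB.le ht0 htB).2
  · intro x
    have key : (∑ j, ⟪x, v j + -(t • frameOp v (v j))⟫ ^ 2)
        = ⟪frameOp v (x - t • frameOp v x), x - t • frameOp v x⟫ := by
      rw [inner_frameOp]
      congr 1; ext j
      congr 1
      have hsymm : ⟪frameOp v x, v j⟫ = ⟪x, frameOp v (v j)⟫ := frameOp_symm v x (v j)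
      rw [inner_add_right, inner_neg_right, real_inner_smul_right,
        inner_sub_left, real_inner_smul_left, hsymm]
      ring
    rw [key]
    have hfin : Module.finrank ℝ (EuclideanSpace ℝ (Fin n)) = n := finrank_euclideanSpace_fin
    set b := (frameOp_symm v).eigenvectorBasis hfin with hb
    set μ := (frameOp_symm v).eigenvalues hfin with hμ
    have heig : ∀ i, frameOp v (b i) = μ i • b i := fun i =>
      (frameOp_symm v).apply_eigenvectorBasis hfin i
    have hortho : ∀ i i' : Fin n, ⟪b i, b i'⟫ = if i = i' then (1:ℝ) else 0 :=
      orthonormal_iff_ite.mp b.orthonormal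
    have hinner : ∀ (d e : Fin n → ℝ),
        ⟪∑ i, d i • b i, ∑ i, e i • b i⟫ = ∑ i, d i * e i := by
      intro d e
      rw [sum_inner]
      congr 1; ext i
      rw [real_inner_smul_left, inner_sum]
      simp only [real_inner_smul_right, hortho, mul_ite, mul_one, mul_zero,
        Finset.sum_ite_eq, Finset.mem_univ, if_true]
    have hμA : ∀ i, A ≤ μ i ∧ μ i ≤ B := by
      intro i
      have hb1 : ‖b i‖ = 1 := b.orthonormal.1 i
      have hsum : (∑ j, ⟪b i, v j⟫ ^ 2) = μ i := by
        rw [← inner_frameOp, heig i, real_inner_smul_left, real_inner_self_eq_norm_sq, hb1]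
        ring
      have h := hframe (b i)
      rw [hsum, hb1] at h
      constructor <;> nlinarith [h.1, h.2]
    set c : Fin n → ℝ := fun i => ⟪b i, x⟫ with hc
    have hx : x = ∑ i, c i • b i := by
      have h := b.sum_repr x
      simp only [b.repr_apply_apply] at h
      exact h.symm
    have hnorm : ‖x‖ ^ 2 = ∑ i, c i ^ 2 := by
      rw [← real_inner_self_eq_norm_sq]
      conv_lhs => rw [hx, hinner c c]
      exact Finset.sum_congr rfl fun i _ => by ring
    have hTx : frameOp v x = ∑ i, (c i * μ i) • b i := by
      conv_lhs => rw [hx]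
      rw [map_sum]
      congr 1; ext i
      rw [LinearMap.map_smul, heig i, smul_smul]
    have hy : x - t • frameOp v x = ∑ i, (c i * (1 - t * μ i)) • b i := by
      rw [hTx]
      conv_lhs => rw [hx]
      rw [Finset.smul_sum, ← Finset.sum_sub_distrib]
      congr 1; funext i
      rw [smul_smul, ← sub_smul]
      congr 1
      ring
    have hTy : frameOp v (x - t • frameOp v x) = ∑ i, (c i * (1 - t * μ i) * μ i) • b i := by
      rw [hy, map_sum]
      congr 1; ext i
      rw [LinearMap.map_smul, heig i, smul_smul]
    have hform : ⟪frameOp v (x - t • frameOp v x), x - t • frameOp v x⟫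
        = ∑ i, (μ i * (1 - t * μ i)^2) * c i ^ 2 := by
      rw [hTy, hy, hinner]
      exact Finset.sum_congr rfl fun i _ => by ring
    rw [hform, hnorm, Finset.mul_sum, Finset.mul_sum]
    constructor <;> refine Finset.sum_le_sum fun i _ => ?_ <;>
      obtain ⟨h1, h2⟩ := hμA i <;> obtain ⟨hf1, hf2⟩ := mono_f hA hAB.le h1 h2 ht0 htB
    · exact mul_le_mul_of_nonneg_right hf1 (sq_nonneg _)
    · exact mul_le_mul_of_nonneg_right hf2 (sq_nonneg _)
  · rw [div_lt_div_iff₀ hA1 hA]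
    have h1 : 0 ≤ 1 - t * B := by nlinarith
    have h2 : 1 - t * B < 1 - t * A := by nlinarith
    have h3 : (1 - t*B)^2 < (1 - t*A)^2 := by nlinarith
    have h4 := mul_lt_mul_of_pos_left h3 (mul_pos hA hB)
    nlinarith [h4]
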